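/- Let W=(S,R,π) be a finite Kripke structure and let φ be an MDL formula built from atoms, negated atoms, dependence atoms and negated dependence atoms using only the dependence disjunction ∨. If the number σ(φ) of positive (i.e., non-negated) dependence atoms occurring in φ satisfies 2^{σ(φ)} > |S|, then W,T ⊨ φ for every team T⊆S. -/

import Mathlib

/-- Syntax of modal dependence logic (MDL) over atomic propositions `AP`. -/
inductive MDL (AP : Type) : Type where
  | top   : MDL AP                       -- ⊤
  | bot   : MDL AP                       -- ⊥
  | atom  : AP → MDL AP                  -- p
  | natom : AP → MDL AP                  -- ¬p
  | dep   : List AP → AP → MDL AP        -- dep(p₁,…,pₙ;q)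
  | ndep  : List AP → AP → MDL AP        -- ¬dep(p₁,…,pₙ;q)
  | and   : MDL AP → MDL AP → MDL AP     -- ∧
  | dor   : MDL AP → MDL AP → MDL AP     -- dependence disjunction ∨
  | cor   : MDL AP → MDL AP → MDL AP     -- classical disjunction ⊻
  | box   : MDL AP → MDL AP              -- □
  | dia   : MDL AP → MDL AP              -- ◇

/-- Team semantics of MDL over a Kripke structure `(S, R, π)`. -/
def MDL.sat {S AP : Type} (R : S → S → Prop) (π : S → Set AP) :
    MDL AP → Set S → Prop
  | .top, _ => True
  | .bot, T => T = ∅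
  | .atom p, T => ∀ s ∈ T, p ∈ π s
  | .natom p, T => ∀ s ∈ T, p ∉ π s
  | .dep ps q, T => ∀ s₁ ∈ T, ∀ s₂ ∈ T,
      (∀ p ∈ ps, (p ∈ π s₁ ↔ p ∈ π s₂)) → (q ∈ π s₁ ↔ q ∈ π s₂)
  | .ndep _ _, T => T = ∅
  | .and φ ψ, T => MDL.sat R π φ T ∧ MDL.sat R π ψ T
  | .dor φ ψ, T => ∃ T₁ T₂ : Set S, T = T₁ ∪ T₂ ∧ MDL.sat R π φ T₁ ∧ MDL.sat R π ψ T₂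
  | .cor φ ψ, T => MDL.sat R π φ T ∨ MDL.sat R π ψ T
  | .box φ, T => MDL.sat R π φ {s' | ∃ s ∈ T, R s s'}
  | .dia φ, T => ∃ T' : Set S, MDL.sat R π φ T' ∧ ∀ s ∈ T, ∃ s' ∈ T', R s s'

/-- Big dependence disjunction ⋁ of a list of formulas (empty disjunction is ⊥). -/
def MDL.bigDor {AP : Type} : List (MDL AP) → MDL AP
  | [] => .bot
  | [φ] => φ
  | φ :: ψ :: rest => .dor φ (MDL.bigDor (ψ :: rest))

/-- Big conjunction ⋀ of a list of formulas (empty conjunction is ⊤). -/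
def MDL.bigAnd {AP : Type} : List (MDL AP) → MDL AP
  | [] => .top
  | [φ] => φ
  | φ :: ψ :: rest => .and φ (MDL.bigAnd (ψ :: rest))

/-- `◇^k φ` : `k` nested ◇ operators. -/
def MDL.diaIter {AP : Type} : ℕ → MDL AP → MDL AP
  | 0, φ => φ
  | n + 1, φ => .dia (MDL.diaIter n φ)

/-- `□^k φ` : `k` nested □ operators. -/
def MDL.boxIter {AP : Type} : ℕ → MDL AP → MDL AP
  | 0, φ => φ
  | n + 1, φ => .box (MDL.boxIter n φ)

/-- A CNF formula with `m` clauses over `n` variables: `C i j = some true` iff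
variable `x_j` occurs positively in clause `C_i`, `some false` iff it occurs
negatively, `none` iff it does not occur (each variable occurs at most once
per clause). -/
def CNF.Satisfiable {m n : ℕ} (C : Fin m → Fin n → Option Bool) : Prop :=
  ∃ θ : Fin n → Bool, ∀ i : Fin m, ∃ j : Fin n, C i j = some (θ j)

/-- `φ` is built from atoms, negated atoms, dependence atoms and negated
dependence atoms using only the dependence disjunction `∨`. -/
def MDL.DorOnly {AP : Type} : MDL AP → Prop
  | .atom _ => True
  | .natom _ => True
  | .dep _ _ => True
  | .ndep _ _ => True
  | .dor φ ψ => MDL.DorOnly φ ∧ MDL.DorOnly ψ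
  | _ => False

/-- `σ(φ)`: the number of occurrences of positive dependence atoms in `φ`. -/
def MDL.sigma {AP : Type} : MDL AP → ℕ
  | .dep _ _ => 1
  | .and φ ψ => MDL.sigma φ + MDL.sigma ψ
  | .dor φ ψ => MDL.sigma φ + MDL.sigma ψ
  | .cor φ ψ => MDL.sigma φ + MDL.sigma ψ
  | .box φ => MDL.sigma φ
  | .dia φ => MDL.sigma φ
  | _ => 0

/-- Targets of the positive dependence atoms, in order. -/
def MDL.depTargets {AP : Type} : MDL AP → List AP
  | .dep _ q => [q]
  | .and φ ψ => MDL.depTargets φ ++ MDL.depTargets ψ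
  | .dor φ ψ => MDL.depTargets φ ++ MDL.depTargets ψ
  | .cor φ ψ => MDL.depTargets φ ++ MDL.depTargets ψ
  | .box φ => MDL.depTargets φ
  | .dia φ => MDL.depTargets φ
  | _ => []

lemma MDL.length_depTargets {AP : Type} (φ : MDL AP) :
    (MDL.depTargets φ).length = MDL.sigma φ := by
  induction φ <;> simp [MDL.depTargets, MDL.sigma, *]

lemma stmt8_key {S AP : Type} (R : S → S → Prop) (π : S → Set AP) :
    ∀ (φ : MDL AP), MDL.DorOnly φ → ∀ (v : ℕ → Bool) (T : Set S),
      (∀ s ∈ T, ∃ i q, (MDL.depTargets φ)[i]? = some q ∧ ((q ∈ π s) ↔ v i = true)) →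
      MDL.sat R π φ T := by
  intro φ
  induction φ with
  | top => intro hD; exact hD.elim
  | bot => intro hD; exact hD.elim
  | and _ _ => intro hD; exact hD.elim
  | cor _ _ => intro hD; exact hD.elim
  | box _ => intro hD; exact hD.elim
  | dia _ => intro hD; exact hD.elim
  | atom p =>
      intro _ v T hT s hs
      obtain ⟨i, q, hq, _⟩ := hT s hs
      simp [MDL.depTargets] at hq
  | natom p =>
      intro _ v T hT s hs
      obtain ⟨i, q, hq, _⟩ := hT s hs
      simp [MDL.depTargets] at hq
  | ndep ps q =>
      intro _ v T hT
      show T = ∅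
      ext s
      simp only [Set.mem_empty_iff_false, iff_false]
      intro hs
      obtain ⟨i, q', hq, _⟩ := hT s hs
      simp [MDL.depTargets] at hq
  | dep ps q =>
      intro _ v T hT s₁ h₁ s₂ h₂ _
      obtain ⟨i, q₁, hq₁, hv₁⟩ := hT s₁ h₁
      obtain ⟨j, q₂, hq₂, hv₂⟩ := hT s₂ h₂
      obtain ⟨hi0, rfl⟩ : i = 0 ∧ q = q₁ := by
        cases i with
        | zero => simpa [MDL.depTargets] using hq₁
        | succ n => simp [MDL.depTargets] at hq₁
      obtain ⟨hj0, rfl⟩ : j = 0 ∧ q = q₂ := by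
        cases j with
        | zero => simpa [MDL.depTargets] using hq₂
        | succ n => simp [MDL.depTargets] at hq₂
      rw [hi0] at hv₁; rw [hj0] at hv₂
      rw [hv₁, hv₂]
  | dor φ ψ ihφ ihψ =>
      intro hD v T hT
      obtain ⟨hφ, hψ⟩ := hD
      set n := (MDL.depTargets φ).length with hn
      refine ⟨{s ∈ T | ∃ i q, (MDL.depTargets φ)[i]? = some q ∧ ((q ∈ π s) ↔ v i = true)},
              {s ∈ T | ∃ i q, (MDL.depTargets ψ)[i]? = some q ∧ ((q ∈ π s) ↔ v (n + i) = true)},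
              ?_, ?_, ?_⟩
      · ext s
        simp only [Set.mem_union, Set.mem_setOf_eq]
        constructor
        · intro hs
          obtain ⟨i, q, hq, hv⟩ := hT s hs
          by_cases hi : i < n
          · left
            refine ⟨hs, i, q, ?_, hv⟩
            rw [MDL.depTargets, List.getElem?_append, if_pos hi] at hq
            exact hq
          · right
            refine ⟨hs, i - n, q, ?_, ?_⟩
            · rw [MDL.depTargets, List.getElem?_append, if_neg hi] at hq
              exact hq
            · rwa [Nat.add_sub_cancel' (le_of_not_gt hi)]
        · rintro (⟨hs, _⟩ | ⟨hs, _⟩) <;> exact hs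
      · exact ihφ hφ v _ (fun s hs => hs.2)
      · exact ihψ hψ (fun i => v (n + i)) _ (fun s hs => hs.2)

/-- If `φ` uses only the dependence disjunction `∨` over
(negated) atoms and (negated) dependence atoms, and `φ` contains more than
`log₂ |S|` positive dependence atoms (i.e. `2^{σ(φ)} > |S|`), then `φ` is
satisfied by every team of the finite structure `W = (S, R, π)`. -/
theorem stmt8 {S AP : Type} [Fintype S] (R : S → S → Prop) (π : S → Set AP)
    (φ : MDL AP) (hφ : MDL.DorOnly φ) (h : 2 ^ MDL.sigma φ > Fintype.card S)
    (T : Set S) :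
    MDL.sat R π φ T := by
  classical
  set L := MDL.depTargets φ with hL
  -- the map sending a world to the complement of its profile on the dep targets
  let g : S → (Fin L.length → Bool) := fun s i => if L.get i ∈ π s then false else true
  have hcard : Fintype.card S < Fintype.card (Fin L.length → Bool) := by
    rw [Fintype.card_fun, Fintype.card_bool, Fintype.card_fin, MDL.length_depTargets]
    exact h
  have hns : ¬ Function.Surjective g := fun hs =>
    absurd (Fintype.card_le_of_surjective g hs) (not_le.mpr hcard)
  rw [Function.Surjective] at hns
  push_neg at hns
  obtain ⟨v0, hv0⟩ := hns
  refine stmt8_key R π φ hφ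
    (fun i => if hi : i < L.length then v0 ⟨i, hi⟩ else true) T (fun s _ => ?_)
  have hne : g s ≠ v0 := hv0 s
  rw [Function.ne_iff] at hne
  obtain ⟨i, hi⟩ := hne
  refine ⟨i, L.get i, ?_, ?_⟩
  · simp [← hL]
  · simp only [dif_pos i.isLt]
    by_cases hmem : L.get i ∈ π s
    · simp only [g, if_pos hmem] at hi
      cases hv : v0 ⟨(i : ℕ), i.isLt⟩ with
      | true => simpa [hmem]
      | false => rw [Fin.eta] at hv; rw [hv] at hi; exact absurd rfl hi
    · simp only [g, if_neg hmem] at hi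
      cases hv : v0 ⟨(i : ℕ), i.isLt⟩ with
      | true => rw [Fin.eta] at hv; rw [hv] at hi; exact absurd rfl hi
      | false => simpa [hmem]
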